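/- For all integers n, j ≥ 0, every integer r ≥ 0 and every real y, the r-Bell polynomials satisfy φ_{j+n,r}(y) = Σ_{l=0}^{n} Σ_{m=0}^{j} Σ_{k=0}^{l} binom(n,l) binom(j,m) r^{n−l} φ_{m,r}(y) y^k k^{j−m} S(l,k), where 0^0 is interpreted as 1. -/

import Mathlib

/-- The Stirling numbers of the second kind `S(n,k)`, counting the number of
partitions of an `n`-element set into `k` nonempty blocks, via the standard
recurrence `S(n+1,k+1) = (k+1) S(n,k+1) + S(n,k)`. -/
def stirling2 : ℕ → ℕ → ℕ
  | 0, 0 => 1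
  | 0, _ + 1 => 0
  | _ + 1, 0 => 0
  | n + 1, k + 1 => (k + 1) * stirling2 n (k + 1) + stirling2 n k

/-- The `r`-Stirling numbers of the second kind
`{n+r \brace k+r}_r = Σ_{i=k}^n binom(n,i) S(i,k) r^(n-i)`. -/
def rStirling2 (r n k : ℕ) : ℕ :=
  ∑ i ∈ Finset.Icc k n, n.choose i * stirling2 i k * r ^ (n - i)

/-- The `r`-Bell polynomials `φ_{n,r}(y) = Σ_{k=0}^n {n+r \brace k+r}_r y^k`. -/
noncomputable def rBellPoly (r n : ℕ) (y : ℝ) : ℝ :=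
  ∑ k ∈ Finset.range (n + 1), (rStirling2 r n k : ℝ) * y ^ k

lemma stirling2_succ_zero (n : ℕ) : stirling2 (n + 1) 0 = 0 := rfl

lemma stirling2_zero_succ (k : ℕ) : stirling2 0 (k + 1) = 0 := rfl

lemma stirling2_succ_succ (n k : ℕ) :
    stirling2 (n + 1) (k + 1) = (k + 1) * stirling2 n (k + 1) + stirling2 n k := rfl

lemma stirling2_eq_zero_of_lt : ∀ {n k : ℕ}, n < k → stirling2 n k = 0 := by
  intro n
  induction n with
  | zero => intro k h; match k, h with | k+1, _ => rfl
  | succ n ih =>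
    intro k h
    match k, h with
    | k+1, h =>
      rw [stirling2_succ_succ, ih (by omega), ih (by omega)]
      simp

lemma stirling2_one (n : ℕ) : stirling2 (n + 1) 1 = 1 := by
  induction n with
  | zero => rfl
  | succ n ih => rw [stirling2_succ_succ, stirling2_succ_zero, ih]

lemma stirling2_succ_sum (i : ℕ) : ∀ k, stirling2 (i + 1) (k + 1) =
    ∑ s ∈ Finset.range (i + 1), i.choose s * stirling2 s k := by
  induction i with
  | zero => intro k; simp [stirling2_succ_succ, stirling2_zero_succ]
  | succ i ih =>
    intro k
    rw [Finset.sum_range_succ']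
    cases k with
    | zero =>
      have h : ∀ s ∈ Finset.range (i+1), (i+1).choose (s+1) * stirling2 (s+1) 0 = 0 :=
        fun s _ => by rw [stirling2_succ_zero, Nat.mul_zero]
      rw [Finset.sum_congr rfl h, Finset.sum_const, stirling2_one]
      simp [stirling2]
    | succ k =>
      have h : ∀ s ∈ Finset.range (i+1),
          (i+1).choose (s+1) * stirling2 (s+1) (k+1)
          = (i.choose s * ((k+1) * stirling2 s (k+1)) + i.choose s * stirling2 s k)
            + i.choose (s+1) * stirling2 (s+1) (k+1) := by
        intro s _; rw [Nat.choose_succ_succ, stirling2_succ_succ]; ring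
      rw [Finset.sum_congr rfl h, Finset.sum_add_distrib, Finset.sum_add_distrib]
      have h2 : ∑ s ∈ Finset.range (i+1), i.choose s * ((k+1) * stirling2 s (k+1))
          = (k+1) * stirling2 (i+1) (k+2) := by
        rw [ih (k+1), Finset.mul_sum]
        exact Finset.sum_congr rfl fun s _ => by ring
      have h3 : ∑ s ∈ Finset.range (i+1), i.choose (s+1) * stirling2 (s+1) (k+1)
          = stirling2 (i+1) (k+2) := by
        have : ∑ s ∈ Finset.range (i+2), i.choose s * stirling2 s (k+1)
            = ∑ s ∈ Finset.range (i+1), i.choose (s+1) * stirling2 (s+1) (k+1) := by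
          rw [Finset.sum_range_succ', stirling2_zero_succ, Nat.mul_zero, Nat.add_zero]
        rw [← this, Finset.sum_range_succ, Nat.choose_succ_self, Nat.zero_mul, Nat.add_zero,
          ← ih (k+1)]
      rw [h2, ← ih k, h3, stirling2_succ_succ, stirling2_zero_succ]
      ring



open Finset in
lemma W1 (m s : ℕ) (x : ℝ) :
    ∑ i ∈ range (m + 1), (m.choose i : ℝ) * (i.choose s : ℝ) * x ^ (m - i)
      = (m.choose s : ℝ) * (1 + x) ^ (m - s) := by
  rcases lt_or_ge m s with h | h
  · rw [Nat.choose_eq_zero_of_lt h]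
    rw [Finset.sum_eq_zero, Nat.cast_zero, zero_mul]
    intro i hi
    rw [Nat.choose_eq_zero_of_lt (lt_of_le_of_lt (Finset.mem_range_succ_iff.mp hi) h)]
    simp
  · have hsub : Finset.Ico s (m+1) ⊆ Finset.range (m+1) := by
      intro i hi; simp only [Finset.mem_Ico] at hi; exact Finset.mem_range.mpr hi.2
    rw [← Finset.sum_subset hsub (by
      intro i hi hni
      simp only [Finset.mem_range] at hi
      simp only [Finset.mem_Ico, not_and, not_lt] at hni
      have : i < s := by by_contra hc; exact absurd hi (by omega) ∘ (fun _ => hni (by omega)) <| ()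
      rw [Nat.choose_eq_zero_of_lt this]; simp)]
    rw [Finset.sum_Ico_eq_sum_range]
    have hr : m + 1 - s = (m - s) + 1 := by omega
    rw [hr]
    have key : ∀ t ∈ range (m - s + 1),
        (m.choose (s+t) : ℝ) * ((s+t).choose s : ℝ) * x ^ (m - (s+t))
          = (m.choose s : ℝ) * (((m-s).choose t : ℝ) * (1:ℝ)^t * x ^ ((m-s) - t)) := by
      intro t ht
      simp only [Finset.mem_range] at ht
      have h1 : m.choose (s+t) * (s+t).choose s = m.choose s * (m-s).choose t := by
        have := Nat.choose_mul (n := m) (k := s+t) (s := s) (by omega)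
        simpa using this
      have h2 : m - (s+t) = (m-s) - t := by omega
      rw [h2]
      have h1' : (↑(m.choose (s+t)) * ↑((s+t).choose s) : ℝ) = ↑(m.choose s) * ↑((m-s).choose t) := by
        exact_mod_cast congrArg (Nat.cast : ℕ → ℝ) h1
      rw [h1']
      ring
    rw [Finset.sum_congr rfl key, ← Finset.mul_sum]
    congr 1
    rw [add_pow (1:ℝ) x (m-s)]
    exact Finset.sum_congr rfl fun t ht => by ring

open Finset in
lemma W2 (m s : ℕ) (x : ℝ) :
    ∑ i ∈ range (m + 1), (m.choose i : ℝ) * (i.choose s : ℝ) * x ^ (i - s)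
      = (m.choose s : ℝ) * (1 + x) ^ (m - s) := by
  rcases lt_or_ge m s with h | h
  · rw [Nat.choose_eq_zero_of_lt h]
    rw [Finset.sum_eq_zero, Nat.cast_zero, zero_mul]
    intro i hi
    rw [Nat.choose_eq_zero_of_lt (lt_of_le_of_lt (Finset.mem_range_succ_iff.mp hi) h)]
    simp
  · have hsub : Finset.Ico s (m+1) ⊆ Finset.range (m+1) := by
      intro i hi; simp only [Finset.mem_Ico] at hi; exact Finset.mem_range.mpr hi.2
    rw [← Finset.sum_subset hsub (by
      intro i hi hni
      simp only [Finset.mem_range] at hi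
      simp only [Finset.mem_Ico, not_and, not_lt] at hni
      have : i < s := by omega
      rw [Nat.choose_eq_zero_of_lt this]; simp)]
    rw [Finset.sum_Ico_eq_sum_range]
    have hr : m + 1 - s = (m - s) + 1 := by omega
    rw [hr]
    have key : ∀ t ∈ range (m - s + 1),
        (m.choose (s+t) : ℝ) * ((s+t).choose s : ℝ) * x ^ ((s+t) - s)
          = (m.choose s : ℝ) * (x^t * (1:ℝ)^((m-s)-t) * ((m-s).choose t : ℝ)) := by
      intro t ht
      have h1 : m.choose (s+t) * (s+t).choose s = m.choose s * (m-s).choose t := by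
        simp only [Finset.mem_range] at ht
        have := Nat.choose_mul (n := m) (k := s+t) (s := s) (by omega)
        simpa using this
      have h2 : s + t - s = t := by omega
      rw [h2]
      have h1' : (↑(m.choose (s+t)) * ↑((s+t).choose s) : ℝ) = ↑(m.choose s) * ↑((m-s).choose t) := by
        exact_mod_cast congrArg (Nat.cast : ℕ → ℝ) h1
      rw [h1']
      ring
    rw [Finset.sum_congr rfl key, ← Finset.mul_sum]
    congr 1
    rw [add_comm (1:ℝ) x, add_pow x (1:ℝ) (m-s)]

lemma binom3 (m s : ℕ) (x : ℝ) :
    ∑ i ∈ Finset.range (m + 1), (m.choose i : ℝ) * (i.choose s : ℝ) * x ^ (m - i)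
      = ∑ i ∈ Finset.range (m + 1), (m.choose i : ℝ) * (i.choose s : ℝ) * x ^ (i - s) :=
  (W1 m s x).trans (W2 m s x).symm


noncomputable def Bp (i : ℕ) (y : ℝ) : ℝ :=
  ∑ k ∈ Finset.range (i + 1), (stirling2 i k : ℝ) * y ^ k

lemma rBell_repr (r N : ℕ) (y : ℝ) :
    rBellPoly r N y
      = ∑ i ∈ Finset.range (N + 1), (N.choose i : ℝ) * (r : ℝ) ^ (N - i) * Bp i y := by
  unfold rBellPoly rStirling2 Bp
  have step1 : ∀ k ∈ Finset.range (N+1),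
      ((∑ i ∈ Finset.Icc k N, N.choose i * stirling2 i k * r ^ (N - i) : ℕ) : ℝ) * y ^ k
        = ∑ i ∈ Finset.range (N+1),
            (N.choose i : ℝ) * (stirling2 i k : ℝ) * (r:ℝ) ^ (N - i) * y ^ k := by
    intro k hk
    rw [← Finset.sum_subset (by
        intro i hi
        simp only [Finset.mem_Icc] at hi
        exact Finset.mem_range.mpr (by omega) : Finset.Icc k N ⊆ Finset.range (N+1)) ?_]
    · push_cast [Finset.sum_mul]
      exact Finset.sum_congr rfl fun i _ => by ring
    · intro i hi hni
      simp only [Finset.mem_range] at hi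
      simp only [Finset.mem_Icc, not_and, not_le] at hni
      have : i < k := by omega
      rw [stirling2_eq_zero_of_lt this]
      simp
  rw [Finset.sum_congr rfl step1, Finset.sum_comm]
  refine Finset.sum_congr rfl fun i hi => ?_
  simp only [Finset.mem_range] at hi
  rw [Finset.mul_sum]
  rw [← Finset.sum_subset (Finset.range_subset_range.mpr (by omega) :
      Finset.range (i+1) ⊆ Finset.range (N+1)) ?_]
  · exact Finset.sum_congr rfl fun k _ => by ring
  · intro k hk hnk
    simp only [Finset.mem_range] at hk hnk
    rw [stirling2_eq_zero_of_lt (by omega)]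
    simp

lemma Bp_succ (i : ℕ) (y : ℝ) :
    Bp (i + 1) y = y * ∑ s ∈ Finset.range (i + 1), (i.choose s : ℝ) * Bp s y := by
  unfold Bp
  rw [Finset.sum_range_succ']
  rw [stirling2_succ_zero]
  simp only [Nat.cast_zero, zero_mul, add_zero]
  have step1 : ∀ k ∈ Finset.range (i+1),
      (stirling2 (i+1) (k+1) : ℝ) * y ^ (k+1)
        = ∑ s ∈ Finset.range (i+1), (i.choose s : ℝ) * (stirling2 s k : ℝ) * y ^ (k+1) := by
    intro k hk
    rw [stirling2_succ_sum i k]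
    push_cast [Finset.sum_mul]
    rfl
  rw [Finset.sum_congr rfl step1, Finset.sum_comm, Finset.mul_sum]
  refine Finset.sum_congr rfl fun s hs => ?_
  simp only [Finset.mem_range] at hs
  rw [Finset.mul_sum, Finset.mul_sum]
  rw [← Finset.sum_subset (Finset.range_subset_range.mpr (by omega) :
      Finset.range (s+1) ⊆ Finset.range (i+1)) ?_]
  · exact Finset.sum_congr rfl fun k _ => by ring
  · intro k hk hnk
    simp only [Finset.mem_range] at hk hnk
    rw [stirling2_eq_zero_of_lt (by omega)]
    simp

lemma swapext (M : ℕ) (g : ℕ → ℕ → ℝ) (hg : ∀ i s, i < s → g i s = 0) :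
    ∑ i ∈ Finset.range (M + 1), ∑ s ∈ Finset.range (i + 1), g i s
      = ∑ s ∈ Finset.range (M + 1), ∑ i ∈ Finset.range (M + 1), g i s := by
  rw [← Finset.sum_comm]
  refine Finset.sum_congr rfl fun i hi => ?_
  simp only [Finset.mem_range] at hi
  refine Finset.sum_subset (Finset.range_subset_range.mpr (by omega)) ?_
  intro s hs hns
  simp only [Finset.mem_range] at hs hns
  exact hg i s (by omega)

lemma lemmaA (r m : ℕ) (y : ℝ) :
    rBellPoly r (m + 1) y
      = r * rBellPoly r m y
        + y * ∑ i ∈ Finset.range (m + 1), (m.choose i : ℝ) * rBellPoly r i y := by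
  rw [rBell_repr r (m+1) y, Finset.sum_range_succ']
  have hsplit : ∀ i ∈ Finset.range (m+1),
      ((m+1).choose (i+1) : ℝ) * (r:ℝ)^(m+1-(i+1)) * Bp (i+1) y
        = (m.choose i : ℝ) * (r:ℝ)^(m-i) * Bp (i+1) y
          + (m.choose (i+1) : ℝ) * (r:ℝ)^(m-i) * Bp (i+1) y := by
    intro i hi
    have h : m+1-(i+1) = m-i := by omega
    rw [h, Nat.choose_succ_succ]
    push_cast; ring
  rw [Finset.sum_congr rfl hsplit, Finset.sum_add_distrib, add_assoc]
  have hR : (∑ i ∈ Finset.range (m+1), (m.choose (i+1) : ℝ) * (r:ℝ)^(m-i) * Bp (i+1) y)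
      + ((m+1).choose 0 : ℝ) * (r:ℝ)^(m+1-0) * Bp 0 y = r * rBellPoly r m y := by
    symm
    rw [rBell_repr r m y, Finset.mul_sum]
    have h1 : ∀ i ∈ Finset.range (m+1),
        (r:ℝ) * ((m.choose i : ℝ) * (r:ℝ)^(m-i) * Bp i y)
          = (m.choose i : ℝ) * (r:ℝ)^(m-i+1) * Bp i y := by
      intro i _; rw [pow_succ]; ring
    rw [Finset.sum_congr rfl h1,
      Finset.sum_range_succ' (fun i => (m.choose i : ℝ) * (r:ℝ)^(m-i+1) * Bp i y) m]
    congr 1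
    · rw [Finset.sum_range_succ]
      have htop : (m.choose (m+1) : ℝ) * (r:ℝ)^(m-m) * Bp (m+1) y = 0 := by
        rw [Nat.choose_succ_self]; simp
      rw [htop, add_zero]
      refine Finset.sum_congr rfl fun i hi => ?_
      simp only [Finset.mem_range] at hi
      have h : m-(i+1)+1 = m-i := by omega
      rw [h]
    · have h : m + 1 - 0 = m - 0 + 1 := by omega
      rw [h]
      norm_num
  rw [hR, add_comm]
  congr 1
  -- remaining: ∑ i, C(m,i) r^(m-i) Bp (i+1) = y * ∑ i, C(m,i) rBellPoly r i y
  have e1 : ∀ i ∈ Finset.range (m+1),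
      (m.choose i : ℝ) * (r:ℝ)^(m-i) * Bp (i+1) y
        = ∑ s ∈ Finset.range (i+1),
            (m.choose i : ℝ) * (i.choose s : ℝ) * (r:ℝ)^(m-i) * (y * Bp s y) := by
    intro i _
    rw [Bp_succ, Finset.mul_sum, Finset.mul_sum]
    exact Finset.sum_congr rfl fun s _ => by ring
  rw [Finset.sum_congr rfl e1,
    swapext m _ (fun i s h => by rw [Nat.choose_eq_zero_of_lt h]; simp)]
  have e2 : ∀ i ∈ Finset.range (m+1),
      (m.choose i : ℝ) * rBellPoly r i y
        = ∑ s ∈ Finset.range (i+1),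
            (m.choose i : ℝ) * (i.choose s : ℝ) * (r:ℝ)^(i-s) * Bp s y := by
    intro i _
    rw [rBell_repr r i y, Finset.mul_sum]
    exact Finset.sum_congr rfl fun s _ => by ring
  rw [Finset.sum_congr rfl e2, Finset.mul_sum]
  have e3 : ∀ i ∈ Finset.range (m+1),
      y * ∑ s ∈ Finset.range (i+1),
          (m.choose i : ℝ) * (i.choose s : ℝ) * (r:ℝ)^(i-s) * Bp s y
        = ∑ s ∈ Finset.range (i+1),
            (m.choose i : ℝ) * (i.choose s : ℝ) * (r:ℝ)^(i-s) * (y * Bp s y) := by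
    intro i _
    rw [Finset.mul_sum]
    exact Finset.sum_congr rfl fun s _ => by ring
  rw [Finset.sum_congr rfl e3,
    swapext m _ (fun i s h => by rw [Nat.choose_eq_zero_of_lt h]; simp)]
  refine Finset.sum_congr rfl fun s _ => ?_
  rw [← Finset.sum_mul, ← Finset.sum_mul, binom3 m s (r:ℝ)]

noncomputable def Pf (y : ℝ) (l t : ℕ) : ℝ :=
  ∑ k ∈ Finset.range (l + 1), y ^ k * (k : ℝ) ^ t * (stirling2 l k : ℝ)

noncomputable def Af (r : ℕ) (y : ℝ) (l j : ℕ) : ℝ :=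
  ∑ m ∈ Finset.range (j + 1), (j.choose m : ℝ) * rBellPoly r m y * Pf y l (j - m)

lemma exchangeE (j : ℕ) (Φ G : ℕ → ℝ) :
    ∑ m ∈ Finset.range (j+1),
        (j.choose m : ℝ) * (∑ i ∈ Finset.range (m+1), (m.choose i : ℝ) * Φ i) * G (j-m)
      = ∑ m ∈ Finset.range (j+1),
          (j.choose m : ℝ) * Φ m * ∑ t ∈ Finset.range (j-m+1), ((j-m).choose t : ℝ) * G t := by
  have e1 : ∀ m ∈ Finset.range (j+1),
      (j.choose m : ℝ) * (∑ i ∈ Finset.range (m+1), (m.choose i : ℝ) * Φ i) * G (j-m)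
        = ∑ i ∈ Finset.range (m+1), (j.choose m : ℝ) * (m.choose i : ℝ) * Φ i * G (j-m) := by
    intro m _
    rw [Finset.mul_sum, Finset.sum_mul]
    exact Finset.sum_congr rfl fun i _ => by ring
  rw [Finset.sum_congr rfl e1,
    swapext j _ (fun m i h => by rw [Nat.choose_eq_zero_of_lt h]; simp)]
  refine Finset.sum_congr rfl fun i hi => ?_
  simp only [Finset.mem_range] at hi
  have hsub : Finset.Ico i (j+1) ⊆ Finset.range (j+1) := fun m hm => by
    simp only [Finset.mem_Ico] at hm; exact Finset.mem_range.mpr hm.2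
  rw [← Finset.sum_subset hsub (by
    intro m hm hnm
    simp only [Finset.mem_range] at hm
    simp only [Finset.mem_Ico, not_and, not_lt] at hnm
    rw [Nat.choose_eq_zero_of_lt (show m < i by omega)]
    simp)]
  rw [Finset.sum_Ico_eq_sum_range]
  have hN : j + 1 - i = (j - i) + 1 := by omega
  rw [hN]
  have e2 : ∀ u ∈ Finset.range ((j-i)+1),
      (j.choose (i+u) : ℝ) * ((i+u).choose i : ℝ) * Φ i * G (j-(i+u))
        = (j.choose i : ℝ) * Φ i * (((j-i).choose ((j-i)-u) : ℝ) * G ((j-i)-u)) := by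
    intro u hu
    simp only [Finset.mem_range] at hu
    have h1 : j.choose (i+u) * (i+u).choose i = j.choose i * (j-i).choose u := by
      have := Nat.choose_mul (n := j) (k := i+u) (s := i) (by omega)
      simpa using this
    have h1' : ((j.choose (i+u) : ℝ)) * ((i+u).choose i : ℝ)
        = (j.choose i : ℝ) * ((j-i).choose u : ℝ) := by
      exact_mod_cast congrArg (Nat.cast : ℕ → ℝ) h1
    have h2 : j - (i+u) = (j-i) - u := by omega
    have h3 : (j-i).choose ((j-i)-u) = (j-i).choose u := Nat.choose_symm (by omega)
    rw [h2, h3, h1']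
    ring
  rw [Finset.sum_congr rfl e2, ← Finset.mul_sum]
  congr 1
  have := Finset.sum_range_reflect (fun t => (((j-i).choose t : ℝ)) * G t) ((j-i)+1)
  simpa using this

lemma Pf_succ (y : ℝ) (l t : ℕ) :
    Pf y (l+1) t = Pf y l (t+1) + y * ∑ u ∈ Finset.range (t+1), (t.choose u : ℝ) * Pf y l u := by
  unfold Pf
  rw [Finset.sum_range_succ' (fun k => y^k * (k:ℝ)^t * (stirling2 (l+1) k : ℝ)) (l+1)]
  have h0 : y^0 * ((0:ℕ):ℝ)^t * (stirling2 (l+1) 0 : ℝ) = 0 := by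
    rw [stirling2_succ_zero]; simp
  rw [h0, add_zero]
  have e1 : ∀ k ∈ Finset.range (l+1),
      y^(k+1) * ((k+1:ℕ):ℝ)^t * (stirling2 (l+1) (k+1) : ℝ)
        = y^(k+1) * ((k+1:ℕ):ℝ)^(t+1) * (stirling2 l (k+1) : ℝ)
          + y^(k+1) * ((k+1:ℕ):ℝ)^t * (stirling2 l k : ℝ) := by
    intro k _
    rw [stirling2_succ_succ]
    push_cast
    ring
  rw [Finset.sum_congr rfl e1, Finset.sum_add_distrib]
  congr 1
  · symm
    rw [Finset.sum_range_succ' (fun k => y^k * (k:ℝ)^(t+1) * (stirling2 l k : ℝ)) l]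
    have h0' : y^0 * ((0:ℕ):ℝ)^(t+1) * (stirling2 l 0 : ℝ) = 0 := by
      simp
    rw [h0', add_zero]
    symm
    rw [Finset.sum_range_succ]
    have htop : y^(l+1) * ((l+1:ℕ):ℝ)^(t+1) * (stirling2 l (l+1) : ℝ) = 0 := by
      rw [stirling2_eq_zero_of_lt (Nat.lt_succ_self l)]; simp
    rw [htop, add_zero]
  · have e2 : ∀ k ∈ Finset.range (l+1),
        y^(k+1) * ((k+1:ℕ):ℝ)^t * (stirling2 l k : ℝ)
          = ∑ u ∈ Finset.range (t+1),
              (t.choose u : ℝ) * (y * (y^k * (k:ℝ)^u * (stirling2 l k : ℝ))) := by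
      intro k _
      have hc : ((k+1:ℕ):ℝ) = (k:ℝ) + 1 := by push_cast; ring
      rw [hc, add_pow (k:ℝ) 1 t, Finset.mul_sum, Finset.sum_mul]
      exact Finset.sum_congr rfl fun u _ => by ring
    rw [Finset.sum_congr rfl e2, Finset.sum_comm, Finset.mul_sum]
    refine Finset.sum_congr rfl fun u _ => ?_
    rw [Finset.mul_sum, Finset.mul_sum]
    exact Finset.sum_congr rfl fun k _ => by ring

lemma Af_succ (r : ℕ) (y : ℝ) (l j : ℕ) :
    Af r y l (j+1) = r * Af r y l j + Af r y (l+1) j := by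
  unfold Af
  rw [Finset.sum_range_succ'
    (fun m => ((j+1).choose m : ℝ) * rBellPoly r m y * Pf y l (j+1-m)) (j+1)]
  have e1 : ∀ m ∈ Finset.range (j+1),
      ((j+1).choose (m+1) : ℝ) * rBellPoly r (m+1) y * Pf y l (j+1-(m+1))
        = (j.choose m : ℝ) * rBellPoly r (m+1) y * Pf y l (j-m)
          + (j.choose (m+1) : ℝ) * rBellPoly r (m+1) y * Pf y l (j-m) := by
    intro m _
    have h : j+1-(m+1) = j-m := by omega
    rw [h, Nat.choose_succ_succ]; push_cast; ring
  rw [Finset.sum_congr rfl e1, Finset.sum_add_distrib, add_assoc]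
  have hC : (∑ m ∈ Finset.range (j+1),
        (j.choose (m+1) : ℝ) * rBellPoly r (m+1) y * Pf y l (j-m))
      + ((j+1).choose 0 : ℝ) * rBellPoly r 0 y * Pf y l (j+1-0)
      = ∑ m ∈ Finset.range (j+1), (j.choose m : ℝ) * rBellPoly r m y * Pf y l ((j-m)+1) := by
    symm
    rw [Finset.sum_range_succ'
      (fun m => (j.choose m : ℝ) * rBellPoly r m y * Pf y l ((j-m)+1)) j]
    congr 1
    · rw [Finset.sum_range_succ]
      have htop : (j.choose (j+1) : ℝ) * rBellPoly r (j+1) y * Pf y l (j-j) = 0 := by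
        rw [Nat.choose_succ_self]; simp
      rw [htop, add_zero]
      refine Finset.sum_congr rfl fun m hm => ?_
      simp only [Finset.mem_range] at hm
      have h : (j-(m+1))+1 = j-m := by omega
      rw [h]
    · have h : j - 0 + 1 = j + 1 - 0 := by omega
      rw [h]; norm_num
  rw [hC]
  have e2 : ∀ m ∈ Finset.range (j+1),
      (j.choose m : ℝ) * rBellPoly r (m+1) y * Pf y l (j-m)
        = (r:ℝ) * ((j.choose m : ℝ) * rBellPoly r m y * Pf y l (j-m))
          + y * ((j.choose m : ℝ)
              * (∑ i ∈ Finset.range (m+1), (m.choose i : ℝ) * rBellPoly r i y)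
              * Pf y l (j-m)) := by
    intro m _
    rw [lemmaA]; ring
  rw [Finset.sum_congr rfl e2, Finset.sum_add_distrib, ← Finset.mul_sum, ← Finset.mul_sum,
    exchangeE j (fun i => rBellPoly r i y) (fun t => Pf y l t)]
  have e4 : ∀ m ∈ Finset.range (j+1),
      (j.choose m : ℝ) * rBellPoly r m y * Pf y (l+1) (j-m)
        = (j.choose m : ℝ) * rBellPoly r m y * Pf y l ((j-m)+1)
          + y * ((j.choose m : ℝ) * rBellPoly r m y
              * ∑ t ∈ Finset.range ((j-m)+1), ((j-m).choose t : ℝ) * Pf y l t) := by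
    intro m _
    rw [Pf_succ]; ring
  rw [Finset.sum_congr rfl e4, Finset.sum_add_distrib, ← Finset.mul_sum]
  ring

lemma F_step (r n j : ℕ) (y : ℝ) :
    ∑ l ∈ Finset.range (n+2), ((n+1).choose l : ℝ) * (r:ℝ)^(n+1-l) * Af r y l j
      = ∑ l ∈ Finset.range (n+1), (n.choose l : ℝ) * (r:ℝ)^(n-l) * Af r y l (j+1) := by
  have e1 : ∀ l ∈ Finset.range (n+1),
      (n.choose l : ℝ) * (r:ℝ)^(n-l) * Af r y l (j+1)
        = (n.choose l : ℝ) * (r:ℝ)^((n-l)+1) * Af r y l j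
          + (n.choose l : ℝ) * (r:ℝ)^(n-l) * Af r y (l+1) j := by
    intro l _
    rw [Af_succ, pow_succ]; ring
  rw [Finset.sum_congr rfl e1, Finset.sum_add_distrib]
  have h2 : ∑ l ∈ Finset.range (n+1), (n.choose l : ℝ) * (r:ℝ)^((n-l)+1) * Af r y l j
      = (∑ l ∈ Finset.range (n+1), (n.choose (l+1) : ℝ) * (r:ℝ)^(n-l) * Af r y (l+1) j)
        + (r:ℝ)^(n+1) * Af r y 0 j := by
    rw [Finset.sum_range_succ' (fun l => (n.choose l : ℝ) * (r:ℝ)^((n-l)+1) * Af r y l j) n]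
    congr 1
    · rw [Finset.sum_range_succ]
      have htop : (n.choose (n+1) : ℝ) * (r:ℝ)^(n-n) * Af r y (n+1) j = 0 := by
        rw [Nat.choose_succ_self]; simp
      rw [htop, add_zero]
      refine Finset.sum_congr rfl fun l hl => ?_
      simp only [Finset.mem_range] at hl
      have h : (n-(l+1))+1 = n-l := by omega
      rw [h]
    · norm_num
  rw [h2]
  symm
  rw [Finset.sum_range_succ'
    (fun l => ((n+1).choose l : ℝ) * (r:ℝ)^(n+1-l) * Af r y l j) (n+1)]
  have e3 : ∀ l ∈ Finset.range (n+1),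
      ((n+1).choose (l+1) : ℝ) * (r:ℝ)^(n+1-(l+1)) * Af r y (l+1) j
        = (n.choose l : ℝ) * (r:ℝ)^(n-l) * Af r y (l+1) j
          + (n.choose (l+1) : ℝ) * (r:ℝ)^(n-l) * Af r y (l+1) j := by
    intro l _
    have h : n+1-(l+1) = n-l := by omega
    rw [h, Nat.choose_succ_succ]; push_cast; ring
  rw [Finset.sum_congr rfl e3, Finset.sum_add_distrib]
  have h4 : ((n+1).choose 0 : ℝ) * (r:ℝ)^(n+1-0) * Af r y 0 j = (r:ℝ)^(n+1) * Af r y 0 j := by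
    norm_num
  rw [h4]
  ring


/-- Spivey-type recurrence for the `r`-Bell polynomials. -/
theorem spivey_recurrence_rBellPoly (n j r : ℕ) (y : ℝ) :
    rBellPoly r (j + n) y =
      ∑ l ∈ Finset.range (n + 1), ∑ m ∈ Finset.range (j + 1),
        ∑ k ∈ Finset.range (l + 1),
          (n.choose l : ℝ) * (j.choose m : ℝ) * (r : ℝ) ^ (n - l) *
            rBellPoly r m y * y ^ k * (k : ℝ) ^ (j - m) * (stirling2 l k : ℝ) := by
  have key : ∀ n j, rBellPoly r (j + n) y
      = ∑ l ∈ Finset.range (n+1), (n.choose l : ℝ) * (r:ℝ)^(n-l) * Af r y l j := by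
    intro n
    induction n with
    | zero =>
      intro j
      rw [Finset.sum_range_one]
      have hP : ∀ t, Pf y 0 t = (0:ℝ)^t := by
        intro t
        unfold Pf
        rw [Finset.sum_range_one]
        norm_num [stirling2]
      have hA : Af r y 0 j = rBellPoly r j y := by
        unfold Af
        rw [Finset.sum_range_succ]
        have hz : ∀ m ∈ Finset.range j,
            (j.choose m : ℝ) * rBellPoly r m y * Pf y 0 (j-m) = 0 := by
          intro m hm
          simp only [Finset.mem_range] at hm
          rw [hP, zero_pow (by omega : j - m ≠ 0)]
          ring
        rw [Finset.sum_eq_zero hz, zero_add, hP, Nat.sub_self, pow_zero, Nat.choose_self]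
        norm_num
      rw [hA]
      norm_num
    | succ n ih =>
      intro j
      have h : j + (n+1) = (j+1) + n := by omega
      rw [h, ih (j+1), ← F_step]
  rw [key n j]
  refine Finset.sum_congr rfl fun l _ => ?_
  unfold Af Pf
  rw [Finset.mul_sum]
  refine Finset.sum_congr rfl fun m _ => ?_
  rw [Finset.mul_sum, Finset.mul_sum]
  exact Finset.sum_congr rfl fun k _ => by ring
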